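/- arXiv:2107.14455 — 6 statements merged into one kernel-verified Lean document; each statement's English description precedes it below -/
import Mathlib

section
/- The function x ↦ x·cot(x) is strictly decreasing on the interval (0, π/2). -/
open Real Set

theorem xcot_strictAntiOn :
    StrictAntiOn (fun x : ℝ => x * (Real.cos x / Real.sin x)) (Set.Ioo 0 (π / 2)) := by
  have hs : ∀ x ∈ Set.Ioo (0:ℝ) (π/2), Real.sin x ≠ 0 := by
    intro x hx
    exact ne_of_gt (Real.sin_pos_of_pos_of_lt_pi hx.1 (lt_trans hx.2 (by linarith [Real.pi_pos])))
  apply StrictAntiOn.mono ?_ (le_refl _)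
  apply strictAntiOn_of_hasDerivWithinAt_neg (f' := fun x => (Real.sin x * Real.cos x - x) / (Real.sin x)^2)
    (convex_Ioo (0:ℝ) (π/2))
  · exact (continuousOn_id.mul ((Real.continuous_cos.continuousOn).div
      (Real.continuous_sin.continuousOn) hs))
  · intro x hx
    rw [interior_Ioo] at hx
    have hsx := hs x hx
    have hd : HasDerivWithinAt (fun x : ℝ => x * (Real.cos x / Real.sin x))
        (1 * (Real.cos x / Real.sin x) + x * ((-Real.sin x * Real.sin x - Real.cos x * Real.cos x) / (Real.sin x)^2))
        (Set.Ioo (0:ℝ) (π/2)) x :=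
      ((hasDerivAt_id x).mul
        ((Real.hasDerivAt_cos x).div (Real.hasDerivAt_sin x) hsx)).hasDerivWithinAt
    rw [interior_Ioo]
    convert hd using 1
    have h1 : Real.sin x ^ 2 + Real.cos x ^ 2 = 1 := by
      rw [add_comm]; exact Real.cos_sq_add_sin_sq x
    field_simp
    linear_combination x * h1
  · intro x hx
    rw [interior_Ioo] at hx
    have hsin : 0 < Real.sin x := Real.sin_pos_of_pos_of_lt_pi hx.1
      (lt_trans hx.2 (by linarith [Real.pi_pos]))
    have hcos : Real.cos x ≤ 1 := Real.cos_le_one x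
    have hxlt : Real.sin x < x := Real.sin_lt hx.1
    have key : Real.sin x * Real.cos x < x := by nlinarith
    exact div_neg_of_neg_of_pos (by linarith) (by positivity)
end

section
/- For every natural number N ≥ 2 and every x ∈ (0, π/2), the inequality (N+1)·cot((π-2x)/N) - N·cot((π-2x)/(N+1)) < 0 holds. -/
open Real Set

lemma tcot_strictAntiOn :
    StrictAntiOn (fun t : ℝ => t * Real.cos t / Real.sin t) (Set.Ioo 0 (π / 2)) := by
  apply strictAntiOn_of_deriv_neg (convex_Ioo _ _)
  · apply ContinuousOn.div
    · exact (continuous_id.mul Real.continuous_cos).continuousOn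
    · exact Real.continuous_sin.continuousOn
    · intro t ht
      exact ne_of_gt (Real.sin_pos_of_pos_of_lt_pi ht.1 (ht.2.trans (by linarith [Real.pi_pos])))
  · intro t ht
    rw [interior_Ioo] at ht
    have hs : Real.sin t ≠ 0 :=
      ne_of_gt (Real.sin_pos_of_pos_of_lt_pi ht.1 (ht.2.trans (by linarith [Real.pi_pos])))
    have hd : HasDerivAt (fun t : ℝ => t * Real.cos t / Real.sin t)
        (((1 * Real.cos t + t * (-Real.sin t)) * Real.sin t - t * Real.cos t * Real.cos t) /
          Real.sin t ^ 2) t :=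
      ((hasDerivAt_id t).mul (Real.hasDerivAt_cos t)).div (Real.hasDerivAt_sin t) hs
    rw [hd.deriv]
    have hsin : Real.sin t * Real.cos t < t := by
      have h2t : Real.sin (2 * t) < 2 * t := Real.sin_lt (by linarith [ht.1])
      rw [Real.sin_two_mul] at h2t
      linarith
    have hpyth := Real.sin_sq_add_cos_sq t
    have hs2 : 0 < Real.sin t ^ 2 := by positivity
    apply div_neg_of_neg_of_pos _ hs2
    have hnum : (1 * Real.cos t + t * (-Real.sin t)) * Real.sin t - t * Real.cos t * Real.cos t
        = Real.sin t * Real.cos t - t := by linear_combination (-t) * hpyth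
    rw [hnum]
    linarith

theorem cot_combination_neg (N : ℕ) (hN : 2 ≤ N) (x : ℝ) (hx : x ∈ Set.Ioo 0 (π / 2)) :
    ((N : ℝ) + 1) * (Real.cos ((π - 2 * x) / N) / Real.sin ((π - 2 * x) / N)) -
      (N : ℝ) * (Real.cos ((π - 2 * x) / (N + 1)) / Real.sin ((π - 2 * x) / (N + 1))) < 0 := by
  obtain ⟨hx0, hx2⟩ := hx
  set y := π - 2 * x with hy
  have hy0 : 0 < y := by simp [hy]; linarith
  have hyπ : y < π := by simp [hy]; linarith
  have hN2 : (2 : ℝ) ≤ (N : ℝ) := by exact_mod_cast hN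
  have hNpos : (0 : ℝ) < N := by linarith
  set a := y / N with ha
  set b := y / (N + 1) with hb
  have hb0 : 0 < b := by positivity
  have hba : b < a := by
    apply div_lt_div_of_pos_left hy0 hNpos
    linarith
  have haπ : a < π / 2 := by
    rw [ha, div_lt_div_iff₀ hNpos (by norm_num : (0:ℝ) < 2)]
    nlinarith
  have hbπ : b < π / 2 := by linarith
  have key := tcot_strictAntiOn ⟨hb0, hbπ⟩ ⟨hb0.trans hba, haπ⟩ hba
  simp only at key
  -- key : a * cos a / sin a < b * cos b / sin b
  have hsa : 0 < Real.sin a := Real.sin_pos_of_pos_of_lt_pi (hb0.trans hba)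
    (haπ.trans (by linarith [Real.pi_pos]))
  have hsb : 0 < Real.sin b := Real.sin_pos_of_pos_of_lt_pi hb0
    (hbπ.trans (by linarith [Real.pi_pos]))
  have ha' : a * (N : ℝ) = y := by rw [ha]; exact div_mul_cancel₀ y hNpos.ne'
  have hb' : b * ((N : ℝ) + 1) = y := by rw [hb]; exact div_mul_cancel₀ y (by positivity)
  -- From key: multiply both sides by N*(N+1)/y
  have key2 : a * (Real.cos a / Real.sin a) < b * (Real.cos b / Real.sin b) := by
    rw [mul_div_assoc] at key; rw [mul_div_assoc] at key; exact key
  have goal : ((N : ℝ) + 1) * (Real.cos a / Real.sin a) < (N : ℝ) * (Real.cos b / Real.sin b) := by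
    have h := mul_lt_mul_of_pos_left key2 (show (0:ℝ) < (N * (N+1)) / y by positivity)
    calc ((N : ℝ) + 1) * (Real.cos a / Real.sin a)
        = (N * (N+1)) / y * (a * (Real.cos a / Real.sin a)) := by
          rw [← ha']; field_simp [(hb0.trans hba).ne']
      _ < (N * (N+1)) / y * (b * (Real.cos b / Real.sin b)) := h
      _ = (N : ℝ) * (Real.cos b / Real.sin b) := by
          rw [← hb']; field_simp
  linarith
end

section
/- For every natural number N ≥ 2, the function h_N(x) := sin((π-2x)/N) / sin((π-2x)/(N+1)) is strictly increasing on (0, π/2). -/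
open Real Set

/-- On `(0, π)`, `sin t / t` is "decreasing": for `0 < d < s < π`, `d * sin s < s * sin d`. -/
lemma aux_sin_div (d s : ℝ) (hd : 0 < d) (hds : d < s) (hs : s < π) :
    d * Real.sin s < s * Real.sin d := by
  have hs0 : 0 < s := hd.trans hds
  have h := strictConcaveOn_sin_Icc.2 (Set.mem_Icc.2 ⟨le_rfl, Real.pi_pos.le⟩)
    (Set.mem_Icc.2 ⟨hs0.le, hs.le⟩) hs0.ne
    (show (0:ℝ) < 1 - d / s by
      have : d / s < 1 := (div_lt_one hs0).2 hds; linarith)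
    (show (0:ℝ) < d / s by positivity)
    (show (1 - d / s) + d / s = 1 by ring)
  simp only [Real.sin_zero, smul_eq_mul, mul_zero, zero_add, smul_zero] at h
  have hds' : d / s * s = d := by field_simp
  rw [hds'] at h
  calc d * Real.sin s = s * (d / s * Real.sin s) := by field_simp
    _ < s * Real.sin d := by
        apply mul_lt_mul_of_pos_left _ hs0
        simpa using h

/-- `tan t / t` is increasing on `(0, π/2)`: for `0 < b < a < π/2`,
`a * (sin b * cos a) < b * (sin a * cos b)`. -/
lemma aux_tan_div (a b : ℝ) (hb : 0 < b) (hba : b < a) (ha : a < π / 2) :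
    a * (Real.sin b * Real.cos a) < b * (Real.sin a * Real.cos b) := by
  have key : (a - b) * Real.sin (a + b) < (a + b) * Real.sin (a - b) := by
    apply aux_sin_div _ _ (by linarith) (by linarith) (by linarith)
  rw [Real.sin_add, Real.sin_sub] at key
  nlinarith [key]

theorem hN_strictMonoOn (N : ℕ) (hN : 2 ≤ N) :
    StrictMonoOn
      (fun x : ℝ => Real.sin ((π - 2 * x) / N) / Real.sin ((π - 2 * x) / (N + 1)))
      (Set.Ioo 0 (π / 2)) := by
  have hn2 : (2 : ℝ) ≤ (N : ℝ) := by exact_mod_cast hN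
  have hn0 : (0 : ℝ) < (N : ℝ) := by linarith
  have hn10 : (0 : ℝ) < (N : ℝ) + 1 := by linarith
  have hpi : (0 : ℝ) < π := Real.pi_pos
  -- basic facts about the arguments on the interval
  have harg : ∀ x ∈ Set.Ioo (0 : ℝ) (π / 2),
      0 < (π - 2 * x) / (N : ℝ) ∧ (π - 2 * x) / (N : ℝ) < π / 2 ∧
      0 < (π - 2 * x) / ((N : ℝ) + 1) ∧ (π - 2 * x) / ((N : ℝ) + 1) < (π - 2 * x) / (N : ℝ) := by
    intro x hx
    obtain ⟨hx0, hx2⟩ := hx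
    have hu : 0 < π - 2 * x := by linarith
    have hu2 : π - 2 * x < π := by linarith
    refine ⟨div_pos hu hn0, ?_, div_pos hu hn10, ?_⟩
    · rw [div_lt_div_iff₀ hn0 (by norm_num : (0:ℝ) < 2)]
      nlinarith
    · apply div_lt_div_of_pos_left hu hn0 (by linarith)
  have hsinb : ∀ x ∈ Set.Ioo (0 : ℝ) (π / 2), 0 < Real.sin ((π - 2 * x) / ((N : ℝ) + 1)) := by
    intro x hx
    obtain ⟨h1, h2, h3, h4⟩ := harg x hx
    exact Real.sin_pos_of_pos_of_lt_pi h3 (by linarith)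
  apply strictMonoOn_of_deriv_pos (convex_Ioo _ _)
  · apply ContinuousOn.div
    · fun_prop
    · fun_prop
    · intro x hx
      exact (hsinb x hx).ne'
  · intro x hx
    rw [interior_Ioo] at hx
    obtain ⟨h1, h2, h3, h4⟩ := harg x hx
    set a := (π - 2 * x) / (N : ℝ) with ha_def
    set b := (π - 2 * x) / ((N : ℝ) + 1) with hb_def
    have hsb : 0 < Real.sin b := hsinb x hx
    have hu0 : HasDerivAt (fun x : ℝ => π - 2 * x) (-2) x := by
      simpa [Pi.sub_def] using (hasDerivAt_const x π).sub ((hasDerivAt_id x).const_mul 2)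
    have hda : HasDerivAt (fun x : ℝ => Real.sin ((π - 2 * x) / N))
        (Real.cos a * (-2 / N)) x := by
      have := (Real.hasDerivAt_sin a).comp x (hu0.div_const (N : ℝ))
      simpa [ha_def, Function.comp_def] using this
    have hdb : HasDerivAt (fun x : ℝ => Real.sin ((π - 2 * x) / (N + 1)))
        (Real.cos b * (-2 / (N + 1))) x := by
      have := (Real.hasDerivAt_sin b).comp x (hu0.div_const ((N : ℝ) + 1))
      simpa [hb_def, Function.comp_def] using this
    have hdf := hda.div hdb hsb.ne'
    rw [show deriv (fun x : ℝ => Real.sin ((π - 2 * x) / N) / Real.sin ((π - 2 * x) / (N + 1))) x = _ from hdf.deriv]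
    apply div_pos _ (by positivity)
    -- numerator positivity
    have hkey := aux_tan_div a b h3 h4 h2
    have hu : 0 < π - 2 * x := by obtain ⟨hx0, hx2⟩ := hx; linarith
    have hea : (N : ℝ) * a = π - 2 * x := by rw [ha_def]; field_simp
    have heb : ((N : ℝ) + 1) * b = π - 2 * x := by rw [hb_def]; field_simp
    -- from a * (sin b * cos a) < b * (sin a * cos b) and N*a = (N+1)*b = u > 0:
    -- (N+1) * sin b * cos a < N * sin a * cos b
    have h5 : ((N : ℝ) + 1) * (Real.sin b * Real.cos a) < (N : ℝ) * (Real.sin a * Real.cos b) := by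
      have h6 : (π - 2 * x) * (((N : ℝ) + 1) * (Real.sin b * Real.cos a))
          < (π - 2 * x) * ((N : ℝ) * (Real.sin a * Real.cos b)) := by
        calc (π - 2 * x) * (((N : ℝ) + 1) * (Real.sin b * Real.cos a))
            = ((N : ℝ) * ((N : ℝ) + 1)) * (a * (Real.sin b * Real.cos a)) := by
              rw [← hea]; ring
          _ < ((N : ℝ) * ((N : ℝ) + 1)) * (b * (Real.sin a * Real.cos b)) := by
              apply mul_lt_mul_of_pos_left hkey (by positivity)
          _ = (π - 2 * x) * ((N : ℝ) * (Real.sin a * Real.cos b)) := by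
              rw [← heb]; ring
      exact lt_of_mul_lt_mul_left h6 hu.le
    have hN0 : (N : ℝ) ≠ 0 := hn0.ne'
    have hN1 : (N : ℝ) + 1 ≠ 0 := hn10.ne'
    have heq : Real.cos a * (-2 / (N:ℝ)) * Real.sin b - Real.sin a * (Real.cos b * (-2 / ((N:ℝ) + 1)))
        = 2 * ((N:ℝ) * (Real.sin a * Real.cos b) - ((N:ℝ) + 1) * (Real.sin b * Real.cos a))
          / ((N:ℝ) * ((N:ℝ) + 1)) := by
      field_simp
      ring
    show 0 < Real.cos a * (-2 / (N:ℝ)) * Real.sin b - Real.sin a * (Real.cos b * (-2 / ((N:ℝ) + 1)))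
    rw [heq]
    apply div_pos _ (by positivity)
    linarith
end

section
/- For every x ∈ (0, π/2), the sequence a_N := sin(π/N) / sin((π-2x)/N), for N ≥ 2, is monotone nondecreasing in N; in particular a_N ≥ a_2 = 1/cos(x) for all N ≥ 2. -/
open Real Set

lemma mul_sin_le_aux (l y : ℝ) (hl0 : 0 ≤ l) (hl1 : l ≤ 1) (hy0 : 0 ≤ y) (hy : y ≤ π) :
    l * Real.sin y ≤ Real.sin (l * y) := by
  have hc := strictConcaveOn_sin_Icc.concaveOn
  have h := hc.2 (show (0:ℝ) ∈ Icc 0 π from ⟨le_refl _, Real.pi_pos.le⟩)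
    (show y ∈ Icc 0 π from ⟨hy0, hy⟩) (by linarith : (0:ℝ) ≤ 1 - l) hl0 (by ring)
  simpa [smul_eq_mul] using h

lemma key_ineq (b t : ℝ) (hb0 : 0 < b) (hbπ : b < π) (ht0 : 0 < t) (ht : t ≤ 1/2) :
    π * Real.cos (π * t) * Real.sin (b * t) ≤ b * Real.sin (π * t) * Real.cos (b * t) := by
  have hs : (0:ℝ) < π + b := by positivity
  have harg : (π - b) / (π + b) * ((π + b) * t) = (π - b) * t := by field_simp
  have h := mul_sin_le_aux ((π - b) / (π + b)) ((π + b) * t)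
    (div_nonneg (by linarith) hs.le) (by rw [div_le_one hs]; linarith) (mul_nonneg hs.le ht0.le)
    (by nlinarith)
  rw [harg] at h
  have h2 : (π - b) * Real.sin ((π + b) * t) ≤ (π + b) * Real.sin ((π - b) * t) := by
    rw [div_mul_eq_mul_div, div_le_iff₀ hs] at h
    nlinarith [h]
  rw [show (π + b) * t = π * t + b * t by ring, show (π - b) * t = π * t - b * t by ring,
      Real.sin_add, Real.sin_sub] at h2
  nlinarith [h2]

lemma f_anti (b : ℝ) (hb0 : 0 < b) (hbπ : b < π) :
    AntitoneOn (fun t => Real.sin (π * t) / Real.sin (b * t)) (Ioc 0 (1/2 : ℝ)) := by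
  have hsinpos : ∀ t ∈ Ioc (0:ℝ) (1/2), 0 < Real.sin (b * t) := by
    intro t ht
    apply Real.sin_pos_of_pos_of_lt_pi (mul_pos hb0 ht.1)
    nlinarith [ht.2, Real.pi_pos]
  have hderiv : ∀ t ∈ Ioo (0:ℝ) (1/2),
      HasDerivAt (fun t => Real.sin (π * t) / Real.sin (b * t))
        ((Real.cos (π * t) * (π * 1) * Real.sin (b * t)
          - Real.sin (π * t) * (Real.cos (b * t) * (b * 1))) / (Real.sin (b * t))^2) t := by
    intro t ht
    have hg : HasDerivAt (fun t => Real.sin (π * t)) (Real.cos (π * t) * (π * 1)) t :=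
      (Real.hasDerivAt_sin (π * t)).comp t ((hasDerivAt_id t).const_mul π)
    have hh : HasDerivAt (fun t => Real.sin (b * t)) (Real.cos (b * t) * (b * 1)) t :=
      (Real.hasDerivAt_sin (b * t)).comp t ((hasDerivAt_id t).const_mul b)
    exact hg.div hh (hsinpos t ⟨ht.1, ht.2.le⟩).ne'
  apply antitoneOn_of_deriv_nonpos (convex_Ioc _ _)
  · apply ContinuousOn.div (by fun_prop) (by fun_prop)
    intro t ht; exact (hsinpos t ht).ne'
  · rw [interior_Ioc]
    intro t ht
    exact (hderiv t ht).differentiableAt.differentiableWithinAt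
  · rw [interior_Ioc]
    intro t ht
    rw [(hderiv t ht).deriv]
    apply div_nonpos_of_nonpos_of_nonneg _ (sq_nonneg _)
    have := key_ineq b t hb0 hbπ ht.1 ht.2.le
    nlinarith [this]

theorem aN_monotone (x : ℝ) (hx : x ∈ Set.Ioo 0 (π / 2)) :
    (∀ N M : ℕ, 2 ≤ N → N ≤ M →
        Real.sin (π / N) / Real.sin ((π - 2 * x) / N) ≤
          Real.sin (π / M) / Real.sin ((π - 2 * x) / M)) ∧
    Real.sin (π / 2) / Real.sin ((π - 2 * x) / 2) = 1 / Real.cos x ∧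
    (∀ N : ℕ, 2 ≤ N →
        1 / Real.cos x ≤ Real.sin (π / N) / Real.sin ((π - 2 * x) / N)) := by
  obtain ⟨hx0, hx2⟩ := hx
  have hb0 : (0:ℝ) < π - 2 * x := by linarith
  have hbπ : π - 2 * x < π := by linarith
  have hmono : ∀ N M : ℕ, 2 ≤ N → N ≤ M →
      Real.sin (π / N) / Real.sin ((π - 2 * x) / N) ≤
        Real.sin (π / M) / Real.sin ((π - 2 * x) / M) := by
    intro N M hN hNM
    have hNR : (2:ℝ) ≤ N := by exact_mod_cast hN
    have hMR : (2:ℝ) ≤ M := by exact_mod_cast hN.trans hNM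
    have hN0 : (0:ℝ) < N := by linarith
    have hM0 : (0:ℝ) < M := by linarith
    have hNM' : (N:ℝ) ≤ M := by exact_mod_cast hNM
    have h := f_anti (π - 2 * x) hb0 hbπ
      (show 1/(M:ℝ) ∈ Ioc 0 (1/2) from
        ⟨by positivity, one_div_le_one_div_of_le (by norm_num) hMR⟩)
      (show 1/(N:ℝ) ∈ Ioc 0 (1/2) from
        ⟨by positivity, one_div_le_one_div_of_le (by norm_num) hNR⟩)
      (one_div_le_one_div_of_le hN0 hNM')
    simpa only [mul_one_div] using h
  have heq : Real.sin (π / 2) / Real.sin ((π - 2 * x) / 2) = 1 / Real.cos x := by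
    rw [show (π - 2 * x) / 2 = π / 2 - x by ring, Real.sin_pi_div_two_sub,
      Real.sin_pi_div_two]
  refine ⟨hmono, heq, fun N hN => ?_⟩
  calc 1 / Real.cos x = Real.sin (π / 2) / Real.sin ((π - 2 * x) / 2) := heq.symm
    _ ≤ _ := by
        have h := hmono 2 N le_rfl hN
        push_cast at h
        simpa [one_div] using h
end

section
/- For every natural number N ≥ 2 and every x ∈ [0, π], the inequality sin(x)·sin(π/N) ≥ N·sin((π-x)/N)·sin(x/N) holds. -/
open Real Set

/-- Core derivative lemma: for `0 ≤ l ≤ 1` and `y ∈ [0, π/2]`,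
`sin(l y) cos y ≤ l cos(l y) sin y`. -/
lemma coreH (l : ℝ) (hl0 : 0 ≤ l) (hl1 : l ≤ 1) {y : ℝ} (hy : y ∈ Icc 0 (π/2)) :
    Real.sin (l*y) * Real.cos y ≤ l * Real.cos (l*y) * Real.sin y := by
  set h : ℝ → ℝ := fun y => l * Real.cos (l*y) * Real.sin y - Real.sin (l*y) * Real.cos y with hh
  have hder : ∀ y : ℝ, HasDerivAt h ((1 - l^2) * Real.sin (l*y) * Real.sin y) y := by
    intro y
    have h1 : HasDerivAt (fun y : ℝ => l * y) l y := by
      simpa using (hasDerivAt_id y).const_mul l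
    have hc : HasDerivAt (fun y => Real.cos (l*y)) (-Real.sin (l*y) * l) y := h1.cos
    have hs : HasDerivAt (fun y => Real.sin (l*y)) (Real.cos (l*y) * l) y := h1.sin
    have H := ((hc.const_mul l).mul (Real.hasDerivAt_sin y)).sub
      (hs.mul (Real.hasDerivAt_cos y))
    exact H.congr_deriv (by ring)
  have hmono : MonotoneOn h (Icc 0 (π/2)) := by
    apply monotoneOn_of_deriv_nonneg (convex_Icc _ _)
    · exact fun y _ => (hder y).continuousAt.continuousWithinAt
    · exact fun y _ => (hder y).differentiableAt.differentiableWithinAt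
    · intro y hy'
      rw [interior_Icc] at hy'
      rw [(hder y).deriv]
      have hy0 : 0 ≤ y := le_of_lt hy'.1
      have hyp : y ≤ π := le_trans (le_of_lt hy'.2) (by linarith [pi_pos])
      have hly0 : 0 ≤ l * y := mul_nonneg hl0 hy0
      have hlyp : l * y ≤ π := le_trans (mul_le_of_le_one_left hy0 hl1) hyp
      have s1 : 0 ≤ Real.sin (l*y) := Real.sin_nonneg_of_nonneg_of_le_pi hly0 hlyp
      have s2 : 0 ≤ Real.sin y := Real.sin_nonneg_of_nonneg_of_le_pi hy0 hyp
      have : 0 ≤ 1 - l^2 := by nlinarith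
      positivity
  have h0 : h 0 = 0 := by simp [hh]
  have key := hmono (left_mem_Icc.2 (by positivity)) hy hy.1
  rw [h0] at key
  simp only [hh] at key
  linarith

/-- Ratio monotonicity of `sin(l y)/sin y`: for `0 ≤ l ≤ 1`, `0 < s ≤ π/2`,
`sin(l s) ≤ sin s * sin (l π/2)`. -/
lemma lemA (l : ℝ) (hl0 : 0 ≤ l) (hl1 : l ≤ 1) {s : ℝ} (hs0 : 0 < s) (hs : s ≤ π/2) :
    Real.sin (l*s) ≤ Real.sin s * Real.sin (l*(π/2)) := by
  rcases eq_or_lt_of_le hs with heq | hlt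
  · rw [heq, Real.sin_pi_div_two, one_mul]
  · set f : ℝ → ℝ := fun y => Real.sin (l*y) / Real.sin y with hf
    have hsinpos : ∀ y ∈ Icc s (π/2), 0 < Real.sin y := by
      intro y hy
      exact Real.sin_pos_of_pos_of_lt_pi (lt_of_lt_of_le hs0 hy.1)
        (lt_of_le_of_lt hy.2 (by linarith [pi_pos]))
    have hmono : MonotoneOn f (Icc s (π/2)) := by
      apply monotoneOn_of_deriv_nonneg (convex_Icc _ _)
      · apply ContinuousOn.div
        · exact (Real.continuous_sin.comp (continuous_const.mul continuous_id)).continuousOn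
        · exact Real.continuous_sin.continuousOn
        · exact fun y hy => ne_of_gt (hsinpos y hy)
      · intro y hy
        rw [interior_Icc] at hy
        have hy' : y ∈ Icc s (π/2) := ⟨le_of_lt hy.1, le_of_lt hy.2⟩
        have h1 : HasDerivAt (fun y : ℝ => l * y) l y := by
          simpa using (hasDerivAt_id y).const_mul l
        exact ((h1.sin.div (Real.hasDerivAt_sin y) (ne_of_gt (hsinpos y hy')))).differentiableAt.differentiableWithinAt
      · intro y hy
        rw [interior_Icc] at hy
        have hy' : y ∈ Icc s (π/2) := ⟨le_of_lt hy.1, le_of_lt hy.2⟩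
        have h1 : HasDerivAt (fun y : ℝ => l * y) l y := by
          simpa using (hasDerivAt_id y).const_mul l
        have hd := h1.sin.div (Real.hasDerivAt_sin y) (ne_of_gt (hsinpos y hy'))
        rw [show deriv f y = _ from hd.deriv]
        apply div_nonneg _ (sq_nonneg _)
        have hcore := coreH l hl0 hl1 (y := y)
          ⟨by linarith [hy.1, hs0], le_of_lt hy.2⟩
        linarith [hcore]
    have hmem1 : s ∈ Icc s (π/2) := ⟨le_refl _, hs⟩
    have hmem2 : π/2 ∈ Icc s (π/2) := ⟨hs, le_refl _⟩
    have key := hmono hmem1 hmem2 hs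
    simp only [hf, Real.sin_pi_div_two, div_one] at key
    rw [div_le_iff₀ (hsinpos s hmem1)] at key
    linarith [key]

/-- Key inequality: for real `n ≥ 2` and `θ ∈ [0, π/2]`,
`(n/2)(cos(2θ/n) - cos(π/n)) ≤ sin(π/n) cos θ`. -/
lemma lemB (n : ℝ) (hn : 2 ≤ n) {θ : ℝ} (hθ : θ ∈ Icc 0 (π/2)) :
    n/2 * Real.cos (2*θ/n) - n/2 * Real.cos (π/n) ≤ Real.sin (π/n) * Real.cos θ := by
  have hn0 : (0:ℝ) < n := by linarith
  set g : ℝ → ℝ := fun θ => Real.sin (π/n) * Real.cos θ - n/2 * Real.cos (2*θ/n)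
      + n/2 * Real.cos (π/n) with hg
  have hder : ∀ θ : ℝ, HasDerivAt g (Real.sin (2*θ/n) - Real.sin (π/n) * Real.sin θ) θ := by
    intro θ
    have h1 : HasDerivAt (fun θ : ℝ => 2*θ/n) (2/n) θ := by
      simpa using ((hasDerivAt_id θ).const_mul 2).div_const n
    have hc : HasDerivAt (fun θ : ℝ => Real.cos (2*θ/n)) (-Real.sin (2*θ/n) * (2/n)) θ := h1.cos
    have H := (((Real.hasDerivAt_cos θ).const_mul (Real.sin (π/n))).sub
      (hc.const_mul (n/2))).add_const (n/2 * Real.cos (π/n))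
    exact H.congr_deriv (by field_simp; ring)
  have hanti : AntitoneOn g (Icc 0 (π/2)) := by
    apply antitoneOn_of_deriv_nonpos (convex_Icc _ _)
    · exact fun y _ => (hder y).continuousAt.continuousWithinAt
    · exact fun y _ => (hder y).differentiableAt.differentiableWithinAt
    · intro y hy'
      rw [interior_Icc] at hy'
      rw [(hder y).deriv]
      have hy0 : 0 < y := hy'.1
      have hy2 : y < π/2 := hy'.2
      have hl0 : 0 ≤ 2*y/π := by positivity
      have hl1 : 2*y/π ≤ 1 := by
        rw [div_le_one pi_pos]; linarith
      have hs0 : 0 < π/n := by positivity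
      have hs : π/n ≤ π/2 := by
        apply div_le_div_of_nonneg_left (le_of_lt pi_pos) two_pos hn
      have key := lemA (2*y/π) hl0 hl1 hs0 hs
      have e1 : 2*y/π * (π/n) = 2*y/n := by
        field_simp
      have e2 : 2*y/π * (π/2) = y := by
        field_simp
      rw [e1, e2] at key
      linarith
  have hend : g (π/2) = 0 := by
    have e : 2*(π/2)/n = π/n := by ring
    simp [hg, e, Real.cos_pi_div_two]
  have key := hanti hθ ⟨by positivity, le_refl _⟩ hθ.2
  rw [hend] at key
  simp only [hg] at key
  linarith

theorem fN_nonneg (N : ℕ) (hN : 2 ≤ N) (x : ℝ) (hx : x ∈ Set.Icc 0 π) :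
    (N : ℝ) * Real.sin ((π - x) / N) * Real.sin (x / N) ≤ Real.sin x * Real.sin (π / N) := by
  obtain ⟨hx0, hxpi⟩ := hx
  set n : ℝ := (N : ℝ) with hn'
  have hn : (2:ℝ) ≤ n := by rw [hn']; exact_mod_cast hN
  have hn0 : (0:ℝ) < n := by linarith
  have hprod : n * Real.sin ((π - x)/n) * Real.sin (x/n)
      = n/2 * Real.cos ((π - 2*x)/n) - n/2 * Real.cos (π/n) := by
    have hc := Real.cos_sub_cos ((π - 2*x)/n) (π/n)
    have e1 : (((π - 2*x)/n) + π/n)/2 = (π - x)/n := by field_simp; ring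
    have e2 : (((π - 2*x)/n) - π/n)/2 = -(x/n) := by field_simp; ring
    rw [e1, e2, Real.sin_neg] at hc
    linear_combination -(n/2) * hc
  rw [hprod]
  rcases le_or_gt x (π/2) with hhalf | hhalf
  · have hθ : π/2 - x ∈ Icc 0 (π/2) := ⟨by linarith, by linarith⟩
    have key := lemB n hn hθ
    have e1 : 2*(π/2 - x)/n = (π - 2*x)/n := by ring
    rw [e1, Real.cos_pi_div_two_sub] at key
    linarith
  · have hθ : x - π/2 ∈ Icc 0 (π/2) := ⟨by linarith, by linarith⟩
    have key := lemB n hn hθ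
    have e1 : 2*(x - π/2)/n = -((π - 2*x)/n) := by ring
    rw [e1, Real.cos_neg] at key
    have e2 : Real.cos (x - π/2) = Real.sin x := by
      rw [← Real.cos_neg, neg_sub, Real.cos_pi_div_two_sub]
    rw [e2] at key
    linarith
end

section
/- For every natural number N ≥ 2 and every ω ∈ [0, π], defining Φ(N, ω) := N·sin(ω/N)·sin(π/N - ω/N) / sin(π/N), one has Φ(N, ω) ≤ Φ(2, ω) = sin(ω). -/
open Real Complex Finset

lemma abs_one_sub_expI (θ : ℝ) :
    ‖(1 - Complex.exp (θ * Complex.I))‖ = 2 * |Real.sin (θ/2)| := by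
  rw [Complex.exp_mul_I, Complex.norm_def, Complex.normSq_apply]
  simp only [Complex.sub_re, Complex.sub_im, Complex.one_re, Complex.one_im,
    Complex.add_re, Complex.add_im, Complex.mul_re, Complex.mul_im,
    Complex.cos_ofReal_re, Complex.cos_ofReal_im, Complex.sin_ofReal_re, Complex.sin_ofReal_im,
    Complex.I_re, Complex.I_im]
  have h1 : Real.cos θ = 1 - 2 * Real.sin (θ/2)^2 := by
    have h := Real.cos_two_mul (θ/2)
    rw [show 2*(θ/2) = θ by ring] at h
    nlinarith [Real.sin_sq_add_cos_sq (θ/2)]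
  have h2 : (1 - (Real.cos θ + (Real.sin θ * 0 - 0 * 1))) * (1 - (Real.cos θ + (Real.sin θ * 0 - 0 * 1))) +
        (0 - (0 + (Real.sin θ * 1 + 0 * 0))) * (0 - (0 + (Real.sin θ * 1 + 0 * 0)))
      = (2 * |Real.sin (θ/2)|)^2 := by
    have h3 : |Real.sin (θ/2)|^2 = Real.sin (θ/2)^2 := _root_.sq_abs _
    nlinarith [Real.sin_sq_add_cos_sq θ]
  rw [h2]
  exact Real.sqrt_sq (by positivity)

lemma abs_expI_sub_expI (α β : ℝ) :
    ‖(Complex.exp (α * Complex.I) - Complex.exp (β * Complex.I))‖ =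
      2 * |Real.sin ((α - β)/2)| := by
  have key : Complex.exp (↑β * Complex.I) = Complex.exp (↑α * Complex.I) * Complex.exp (↑(β - α) * Complex.I) := by
    rw [← Complex.exp_add]
    congr 1
    push_cast
    ring
  have h : Complex.exp (↑α * Complex.I) - Complex.exp (↑β * Complex.I) =
      Complex.exp (↑α * Complex.I) * (1 - Complex.exp (↑(β - α) * Complex.I)) := by
    rw [mul_sub, mul_one, ← key]
  rw [h, norm_mul, Complex.norm_exp]
  simp only [Complex.mul_re, Complex.ofReal_re, Complex.I_re, Complex.ofReal_im, Complex.I_im]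
  rw [show α * 0 - 0 * 1 = 0 by ring, Real.exp_zero, one_mul, abs_one_sub_expI]
  rw [show (β - α)/2 = -((α - β)/2) by ring, Real.sin_neg, abs_neg]

set_option maxHeartbeats 2000000 in
lemma key_ineq_s10 (M : ℕ) (x : ℝ) (hx0 : 0 ≤ x) (hx1 : x ≤ π/(M+2)) :
    ((M:ℝ)+2) * Real.sin x * Real.sin (π/(M+2) - x) ≤
      Real.sin (((M:ℝ)+2)*x) * Real.sin (π/(M+2)) := by
  set a : ℝ := π/(M+2) with ha
  have hapos : 0 < a := by positivity
  have hMa : ((M:ℝ)+2) * a = π := by rw [ha]; field_simp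
  have hζ : IsPrimitiveRoot (Complex.exp ((2*a : ℝ) * Complex.I)) (M+2) := by
    have h2 : ((2*a : ℝ) : ℂ) * Complex.I = 2 * (π:ℂ) * Complex.I / ((M+2:ℕ):ℂ) := by
      rw [ha, Complex.ofReal_mul, Complex.ofReal_div]
      push_cast
      ring
    rw [h2]
    exact Complex.isPrimitiveRoot_exp (M+2) (by omega)
  -- Identity B : ∏_{k<M+1} 2 sin((k+1)a) = M+2
  have hB : ∏ k ∈ range (M+1), (2 * Real.sin (((k:ℝ)+1) * a)) = (M:ℝ)+2 := by
    have hBc := hζ.prod_one_sub_pow_eq_order (n := M+1)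
    have hB' := congrArg (‖·‖) hBc
    rw [norm_prod] at hB'
    have hterm : ∀ k ∈ range (M+1),
        ‖(1 - Complex.exp ((2*a : ℝ) * Complex.I) ^ (k+1))‖ = 2 * Real.sin (((k:ℝ)+1) * a) := by
      intro k hk
      rw [mem_range] at hk
      have hk' : (k:ℝ) + 1 ≤ (M:ℝ) + 2 := by
        have : (k:ℝ) < (M:ℝ) + 1 := by exact_mod_cast hk
        linarith
      rw [← Complex.exp_nat_mul]
      have harg : ((k+1 : ℕ) : ℂ) * (((2*a : ℝ) : ℂ) * Complex.I) = ((((k:ℝ)+1) * (2*a) : ℝ) : ℂ) * Complex.I := by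
        push_cast; ring
      rw [harg, abs_one_sub_expI]
      rw [show ((k:ℝ)+1) * (2*a) / 2 = ((k:ℝ)+1) * a by ring]
      rw [_root_.abs_of_nonneg (Real.sin_nonneg_of_nonneg_of_le_pi (by positivity) (by nlinarith))]
    rw [Finset.prod_congr rfl hterm] at hB'
    rw [hB']
    have h4 : ((M+1 : ℕ):ℂ) + 1 = ((M+2 : ℕ) : ℂ) := by push_cast; ring
    rw [h4, Complex.norm_natCast]
    push_cast; ring
  -- Identity A : 2 sin((M+2)x) = (∏_{k<M+1} 2 sin((k+1)a - x)) * 2 sin x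
  have hA : 2 * Real.sin (((M:ℝ)+2)*x) =
      (∏ k ∈ range (M+1), (2 * Real.sin (((k:ℝ)+1) * a - x))) * (2 * Real.sin x) := by
    have hpoly := X_pow_sub_C_eq_prod hζ (n := M+2) (α := 1) (a := 1) (by omega) (one_pow _)
    have hev := congrArg (Polynomial.eval (Complex.exp ((2*x : ℝ) * Complex.I))) hpoly
    simp only [Polynomial.eval_sub, Polynomial.eval_pow, Polynomial.eval_X, Polynomial.eval_C,
      Polynomial.eval_prod, mul_one] at hev
    have habs := congrArg (‖·‖) hev
    rw [norm_prod] at habs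
    have hL : ‖(Complex.exp ((2*x : ℝ) * Complex.I) ^ (M+2) - 1)‖ = 2 * Real.sin (((M:ℝ)+2)*x) := by
      rw [← Complex.exp_nat_mul]
      have harg : ((M+2 : ℕ) : ℂ) * (((2*x : ℝ) : ℂ) * Complex.I) = ((((M:ℝ)+2) * (2*x) : ℝ) : ℂ) * Complex.I := by
        push_cast; ring
      rw [harg]
      rw [show (Complex.exp (((((M:ℝ)+2) * (2*x) : ℝ)) * Complex.I) - 1) =
        -(1 - Complex.exp (((((M:ℝ)+2) * (2*x) : ℝ)) * Complex.I)) by ring]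
      rw [norm_neg, abs_one_sub_expI]
      rw [show ((M:ℝ)+2) * (2*x) / 2 = ((M:ℝ)+2)*x by ring]
      rw [_root_.abs_of_nonneg (Real.sin_nonneg_of_nonneg_of_le_pi (by positivity) (by nlinarith))]
    have hterm : ∀ i ∈ range (M+2),
        ‖(Complex.exp ((2*x : ℝ) * Complex.I) - Complex.exp ((2*a : ℝ) * Complex.I) ^ i)‖ =
          2 * |Real.sin (x - i * a)| := by
      intro i hi
      rw [← Complex.exp_nat_mul]
      have harg : ((i : ℕ) : ℂ) * (((2*a : ℝ) : ℂ) * Complex.I) = (((i : ℝ) * (2*a) : ℝ) : ℂ) * Complex.I := by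
        push_cast; ring
      rw [harg, abs_expI_sub_expI]
      rw [show (2*x - (i:ℝ)*(2*a))/2 = x - i*a by ring]
    rw [hL, Finset.prod_congr rfl hterm] at habs
    rw [Finset.prod_range_succ'] at habs
    simp only [Nat.cast_zero, zero_mul, sub_zero] at habs
    rw [_root_.abs_of_nonneg (Real.sin_nonneg_of_nonneg_of_le_pi hx0 (by nlinarith))] at habs
    have hterm2 : ∀ k ∈ range (M+1),
        2 * |Real.sin (x - (k+1 : ℕ) * a)| = 2 * Real.sin (((k:ℝ)+1) * a - x) := by
      intro k hk
      rw [mem_range] at hk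
      have hk' : (k:ℝ) + 1 ≤ (M:ℝ) + 1 := by
        have : (k:ℝ) ≤ (M:ℝ) := by exact_mod_cast Nat.lt_succ_iff.mp hk
        linarith
      have h1 : ((k:ℝ)+1)*a - x ≤ π := by nlinarith
      have h0 : 0 ≤ ((k:ℝ)+1)*a - x := by nlinarith
      rw [show x - ((k+1 : ℕ):ℝ) * a = -(((k:ℝ)+1)*a - x) by push_cast; ring, Real.sin_neg, abs_neg]
      rw [_root_.abs_of_nonneg (Real.sin_nonneg_of_nonneg_of_le_pi h0 h1)]
    rw [Finset.prod_congr rfl hterm2] at habs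
    exact habs
  -- peel off k = 0 from both products
  set f : ℕ → ℝ := fun k => 2 * Real.sin (((k:ℝ)+2) * a - x) with hf
  set g : ℕ → ℝ := fun k => 2 * Real.sin (((k:ℝ)+2) * a) with hg
  have hpeelA : ∏ k ∈ range (M+1), (2 * Real.sin (((k:ℝ)+1) * a - x)) =
      (∏ k ∈ range M, f k) * (2 * Real.sin (a - x)) := by
    rw [Finset.prod_range_succ']
    congr 1
    · apply Finset.prod_congr rfl
      intro k _
      rw [hf]
      push_cast
      ring_nf
    · norm_num
  have hpeelB : ∏ k ∈ range (M+1), (2 * Real.sin (((k:ℝ)+1) * a)) =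
      (∏ k ∈ range M, g k) * (2 * Real.sin a) := by
    rw [Finset.prod_range_succ']
    congr 1
    · apply Finset.prod_congr rfl
      intro k _
      rw [hg]
      push_cast
      ring_nf
    · norm_num
  set P : ℝ := ∏ k ∈ range M, f k with hP
  set Q : ℝ := ∏ k ∈ range M, g k with hQ
  rw [hpeelA] at hA
  rw [hpeelB] at hB
  -- nonnegativity facts
  have hbound : ∀ k, k ∈ range M → 0 ≤ ((k:ℝ)+1)*a ∧ ((k:ℝ)+2)*a ≤ π := by
    intro k hk
    rw [mem_range] at hk
    have : (k:ℝ) + 1 ≤ (M:ℝ) := by exact_mod_cast hk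
    constructor
    · positivity
    · nlinarith
  have hfnn : ∀ k ∈ range M, 0 ≤ f k := by
    intro k hk
    obtain ⟨h1, h2⟩ := hbound k hk
    have := Real.sin_nonneg_of_nonneg_of_le_pi (x := ((k:ℝ)+2)*a - x) (by linarith) (by linarith)
    simp only [hf]
    linarith
  have hgnn : ∀ k ∈ range M, 0 ≤ g k := by
    intro k hk
    obtain ⟨h1, h2⟩ := hbound k hk
    have := Real.sin_nonneg_of_nonneg_of_le_pi (x := ((k:ℝ)+2)*a) (by positivity) h2
    simp only [hg]
    linarith
  have hPnn : 0 ≤ P := Finset.prod_nonneg hfnn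
  have hQnn : 0 ≤ Q := Finset.prod_nonneg hgnn
  -- pairwise inequality
  have hpair : ∀ k ∈ range M, g k * g (M-1-k) ≤ f k * f (M-1-k) := by
    intro k hk
    rw [mem_range] at hk
    have hmem' : M-1-k ∈ range M := by rw [mem_range]; omega
    have hidx : (M-1-k : ℕ) = M - (k+1) := by omega
    have hcast : ((M-1-k : ℕ) : ℝ) = (M:ℝ) - ((k:ℝ)+1) := by
      rw [hidx, Nat.cast_sub (by omega)]
      push_cast; ring
    have hfk : f (M-1-k) = 2 * Real.sin (((k:ℝ)+1)*a + x) := by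
      simp only [hf, hcast]
      rw [show ((M:ℝ) - ((k:ℝ)+1) + 2)*a - x = π - ((((k:ℝ)+1)*a) + x) by linear_combination hMa]
      rw [Real.sin_pi_sub]
    have hgk : g (M-1-k) = 2 * Real.sin (((k:ℝ)+1)*a) := by
      simp only [hg, hcast]
      rw [show ((M:ℝ) - ((k:ℝ)+1) + 2)*a = π - (((k:ℝ)+1)*a) by linear_combination hMa]
      rw [Real.sin_pi_sub]
    rw [hfk, hgk]
    simp only [hf, hg]
    have e1 : ∀ A B : ℝ, Real.sin A * Real.sin B = (Real.cos (A-B) - Real.cos (A+B))/2 := by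
      intro A B
      rw [Real.cos_sub, Real.cos_add]
      ring
    have hcos : Real.cos a ≤ Real.cos (a - 2*x) := by
      rw [← Real.cos_abs (a - 2*x)]
      apply Real.cos_le_cos_of_nonneg_of_le_pi (abs_nonneg _) (by nlinarith [hMa, hapos, Nat.cast_nonneg (α := ℝ) M])
      rw [abs_le]
      constructor <;> linarith
    have h2 : Real.sin (((k:ℝ)+2)*a) * Real.sin (((k:ℝ)+1)*a) ≤
        Real.sin (((k:ℝ)+2)*a - x) * Real.sin (((k:ℝ)+1)*a + x) := by
      rw [e1, e1]
      rw [show ((k:ℝ)+2)*a - ((k:ℝ)+1)*a = a by ring]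
      rw [show ((k:ℝ)+2)*a - x - (((k:ℝ)+1)*a + x) = a - 2*x by ring]
      rw [show ((k:ℝ)+2)*a - x + (((k:ℝ)+1)*a + x) = ((k:ℝ)+2)*a + ((k:ℝ)+1)*a by ring]
      linarith
    nlinarith [h2]
  -- squared comparison
  have hPP : P * P = ∏ k ∈ range M, (f k * f (M-1-k)) := by
    rw [Finset.prod_mul_distrib, hP]
    congr 1
    exact (Finset.prod_range_reflect f M).symm
  have hQQ : Q * Q = ∏ k ∈ range M, (g k * g (M-1-k)) := by
    rw [Finset.prod_mul_distrib, hQ]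
    congr 1
    exact (Finset.prod_range_reflect g M).symm
  have hsq : Q * Q ≤ P * P := by
    rw [hPP, hQQ]
    apply Finset.prod_le_prod
    · intro k hk
      have hmem' : M-1-k ∈ range M := by rw [mem_range] at hk ⊢; omega
      exact mul_nonneg (hgnn k hk) (hgnn _ hmem')
    · exact hpair
  have hQP : Q ≤ P := by nlinarith
  -- conclusion
  have hsx : 0 ≤ Real.sin x := Real.sin_nonneg_of_nonneg_of_le_pi hx0 (by nlinarith)
  have hsax : 0 ≤ Real.sin (a - x) := Real.sin_nonneg_of_nonneg_of_le_pi (by linarith) (by nlinarith)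
  have hsa : 0 ≤ Real.sin a := Real.sin_nonneg_of_nonneg_of_le_pi (le_of_lt hapos) (by nlinarith)
  have hSin : Real.sin (((M:ℝ)+2)*x) = 2 * (P * (Real.sin (a-x) * Real.sin x)) := by
    linear_combination hA / 2
  have hN2 : (M:ℝ)+2 = 2 * (Q * Real.sin a) := by linear_combination hB.symm
  rw [hSin, hN2]
  nlinarith [mul_le_mul_of_nonneg_right hQP (mul_nonneg (mul_nonneg hsa hsx) hsax)]

theorem Phi_le_Phi_two (N : ℕ) (hN : 2 ≤ N) (ω : ℝ) (hω : ω ∈ Set.Icc 0 π) :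
    (N : ℝ) * Real.sin (ω / N) * Real.sin (π / N - ω / N) / Real.sin (π / N) ≤
      (2 : ℝ) * Real.sin (ω / 2) * Real.sin (π / 2 - ω / 2) / Real.sin (π / 2) ∧
    (2 : ℝ) * Real.sin (ω / 2) * Real.sin (π / 2 - ω / 2) / Real.sin (π / 2) = Real.sin ω := by
  obtain ⟨hω0, hω1⟩ := hω
  have h2 : (2 : ℝ) * Real.sin (ω / 2) * Real.sin (π / 2 - ω / 2) / Real.sin (π / 2) = Real.sin ω := by
    rw [Real.sin_pi_div_two_sub, Real.sin_pi_div_two, div_one, ← Real.sin_two_mul, show 2*(ω/2) = ω by ring]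
  refine ⟨?_, h2⟩
  rw [h2]
  obtain ⟨M, rfl⟩ : ∃ M, N = M + 2 := ⟨N - 2, by omega⟩
  have hcast : ((M+2 : ℕ) : ℝ) = (M:ℝ) + 2 := by push_cast; ring
  rw [hcast]
  have hden : 0 < Real.sin (π / ((M:ℝ)+2)) := by
    apply Real.sin_pos_of_pos_of_lt_pi
    · positivity
    · rw [div_lt_iff₀ (by positivity)]
      nlinarith [Real.pi_pos]
  rw [div_le_iff₀ hden]
  have hx0 : 0 ≤ ω / ((M:ℝ)+2) := by positivity
  have hx1 : ω / ((M:ℝ)+2) ≤ π / ((M:ℝ)+2) := by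
    gcongr
  have := key_ineq_s10 M (ω / ((M:ℝ)+2)) hx0 hx1
  rw [show ((M:ℝ)+2) * (ω / ((M:ℝ)+2)) = ω by field_simp] at this
  exact this
end
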